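/- If there exists an [n,k,d] code over F_5 with k ≥ 2, then there exists an [n-d, k-1, d'] code over F_5 with d' ≥ d/5 (i.e., 5·d' ≥ d). -/
import Mathlib


/-- `C` has minimum nonzero Hamming weight `d`. -/
def IsMinWt {n : ℕ} (C : Submodule (ZMod 5) (Fin n → ZMod 5)) (d : ℕ) : Prop :=
  (∃ x ∈ C, x ≠ 0 ∧ hammingNorm x = d) ∧ ∀ x ∈ C, x ≠ 0 → d ≤ hammingNorm x

/-- Residual code: an `[n,k,d]₅` code with `k ≥ 2` yields an `[n-d,k-1,d']₅`
code with `5·d' ≥ d`. -/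
theorem stmt_4 {n k d : ℕ} (hk2 : 2 ≤ k)
    (h : ∃ C : Submodule (ZMod 5) (Fin n → ZMod 5),
      Module.finrank (ZMod 5) C = k ∧ IsMinWt C d) :
    ∃ D : Submodule (ZMod 5) (Fin (n - d) → ZMod 5),
      Module.finrank (ZMod 5) D = k - 1 ∧ ∃ d', IsMinWt D d' ∧ d ≤ 5 * d' := by
  classical
  haveI : Fact (Nat.Prime 5) := ⟨by norm_num⟩
  obtain ⟨C, hCk, ⟨⟨c, hcC, hc0, hcd⟩, hmin⟩⟩ := h
  have hd1 : 1 ≤ d := by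
    rcases Nat.eq_zero_or_pos d with h0 | h1
    · exact absurd (hammingNorm_eq_zero.mp (hcd.trans h0)) hc0
    · exact h1
  set S : Finset (Fin n) := Finset.univ.filter (fun i => c i ≠ 0) with hSdef
  have hScard : S.card = d := hcd
  have hSccard : Sᶜ.card = n - d := by
    rw [Finset.card_compl, hScard, Fintype.card_fin]
  let e : Fin (n - d) ≃ {i // i ∈ Sᶜ} := (finCongr hSccard.symm).trans Sᶜ.equivFin.symm
  let π : (Fin n → ZMod 5) →ₗ[ZMod 5] (Fin (n - d) → ZMod 5) :=
    LinearMap.funLeft (ZMod 5) (ZMod 5) (fun j => ((e j : Fin n)))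
  have hπ : ∀ (x : Fin n → ZMod 5) (j : Fin (n - d)), π x j = x (e j) := fun _ _ => rfl
  -- weight of π x
  have wt_pi : ∀ x : Fin n → ZMod 5,
      hammingNorm (π x) = (Sᶜ.filter (fun i => x i ≠ 0)).card := by
    intro x
    unfold hammingNorm
    apply Finset.card_bij (fun j _ => ((e j : Fin n)))
    · intro j hj
      simp only [Finset.mem_filter, Finset.mem_univ, true_and] at hj ⊢
      exact ⟨(e j).2, hj⟩
    · intro a ha b hb hab
      exact e.injective (Subtype.ext hab)
    · intro i hi
      simp only [Finset.mem_filter] at hi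
      refine ⟨e.symm ⟨i, hi.1⟩, ?_, ?_⟩
      · simp only [Finset.mem_filter, Finset.mem_univ, true_and, hπ]
        rw [Equiv.apply_symm_apply]
        exact hi.2
      · rw [Equiv.apply_symm_apply]
  -- weight splitting
  have wt_split : ∀ x : Fin n → ZMod 5,
      hammingNorm x = (S.filter (fun i => x i ≠ 0)).card
        + (Sᶜ.filter (fun i => x i ≠ 0)).card := by
    intro x
    unfold hammingNorm
    rw [← Finset.card_union_of_disjoint, ← Finset.filter_union, Finset.union_compl]
    exact Finset.disjoint_filter_filter disjoint_compl_right
  have pi_c : π c = 0 := by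
    funext j
    have h2 := (e j).2
    simp only [Finset.mem_compl, hSdef, Finset.mem_filter, Finset.mem_univ, true_and,
      not_not] at h2
    exact h2
  have pi_zero : ∀ x : Fin n → ZMod 5, π x = 0 → ∀ i ∈ Sᶜ, x i = 0 := by
    intro x hx i hi
    have := congrFun hx (e.symm ⟨i, hi⟩)
    rw [hπ, Equiv.apply_symm_apply] at this
    exact this
  -- pigeonhole
  have pigeon : ∀ x : Fin n → ZMod 5,
      ∃ l : ZMod 5, d ≤ 5 * (S.filter (fun i => x i = l * c i)).card := by
    intro x
    have hsum : ∑ l : ZMod 5, (S.filter (fun i => x i * (c i)⁻¹ = l)).card = d := by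
      rw [← hScard]
      exact (Finset.card_eq_sum_card_fiberwise (fun i _ => Finset.mem_univ _)).symm
    have hne : (Finset.univ : Finset (ZMod 5)).Nonempty := Finset.univ_nonempty
    have hle : ∑ _l : ZMod 5, d ≤
        ∑ l : ZMod 5, 5 * (S.filter (fun i => x i * (c i)⁻¹ = l)).card := by
      rw [← Finset.mul_sum, hsum, Finset.sum_const, Finset.card_univ]
      simp [ZMod.card]
    obtain ⟨l, -, hl⟩ := Finset.exists_le_of_sum_le hne hle
    refine ⟨l, le_trans hl ?_⟩
    apply Nat.mul_le_mul_left
    apply Finset.card_le_card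
    intro i hi
    simp only [Finset.mem_filter] at hi ⊢
    have hci : c i ≠ 0 := by
      have := hi.1
      simp only [hSdef, Finset.mem_filter] at this
      exact this.2
    refine ⟨hi.1, ?_⟩
    have hci2 : (c i : ZMod 5) ≠ (0 : ZMod 5) := hci
    have h2 : x i = (x i * (c i)⁻¹) * c i := by
      rw [mul_assoc, inv_mul_cancel₀ hci2, mul_one]
    rw [h2, hi.2]
  -- key bounds
  have key : ∀ x ∈ C, (π x ≠ 0 → d ≤ 5 * hammingNorm (π x)) ∧
      (π x = 0 → ∃ l : ZMod 5, x = l • c) := by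
    intro x hxC
    obtain ⟨l, hl⟩ := pigeon x
    set z : Fin n → ZMod 5 := x - l • c with hzdef
    have hzC : z ∈ C := C.sub_mem hxC (C.smul_mem l hcC)
    have hπz : π z = π x := by
      rw [hzdef, map_sub, map_smul, pi_c, smul_zero, sub_zero]
    set A := (S.filter (fun i => x i = l * c i)).card with hA
    have hAd : A ≤ d := by
      rw [← hScard]; exact Finset.card_le_card (Finset.filter_subset _ _)
    have hzS : (S.filter (fun i => z i ≠ 0)).card ≤ d - A := by
      have hsub : S.filter (fun i => z i ≠ 0) ⊆ S \ S.filter (fun i => x i = l * c i) := by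
        intro i hi
        simp only [Finset.mem_filter, Finset.mem_sdiff] at hi ⊢
        refine ⟨hi.1, fun hmem => hi.2 ?_⟩
        simp only [hzdef, Pi.sub_apply, Pi.smul_apply, smul_eq_mul]
        rw [hmem.2]; ring
      calc (S.filter (fun i => z i ≠ 0)).card ≤ _ := Finset.card_le_card hsub
        _ = S.card - A := Finset.card_sdiff_of_subset (Finset.filter_subset _ _)
        _ = d - A := by rw [hScard]
    constructor
    · intro hπx
      have hz0 : z ≠ 0 := by
        intro h0; rw [h0, map_zero] at hπz; exact hπx hπz.symm
      have hdz := hmin z hzC hz0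
      have := wt_split z
      have hzc : (Sᶜ.filter (fun i => z i ≠ 0)).card = hammingNorm (π x) := by
        rw [← wt_pi z, hπz]
      omega
    · intro hπx
      have hzc : (Sᶜ.filter (fun i => z i ≠ 0)).card = 0 := by
        rw [← wt_pi z, hπz, hπx, hammingNorm_zero]
      have hz0 : z = 0 := by
        by_contra hz0
        have hdz := hmin z hzC hz0
        have := wt_split z
        omega
      exact ⟨l, by rw [← sub_eq_zero]; exact hz0⟩
  have hfin : Module.finrank (ZMod 5)
      (LinearMap.range (π ∘ₗ C.subtype)) + Module.finrank (ZMod 5)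
      (LinearMap.ker (π ∘ₗ C.subtype)) = Module.finrank (ZMod 5) C :=
    LinearMap.finrank_range_add_finrank_ker _
  have hrange : LinearMap.range (π ∘ₗ C.subtype) = C.map π := by
    rw [LinearMap.range_comp, Submodule.range_subtype]
  have hc' : (⟨c, hcC⟩ : C) ≠ 0 := fun h0 => hc0 (congrArg Subtype.val h0)
  have hker : LinearMap.ker (π ∘ₗ C.subtype) =
      Submodule.span (ZMod 5) {(⟨c, hcC⟩ : C)} := by
    ext ⟨x, hx⟩
    simp only [LinearMap.mem_ker, LinearMap.coe_comp, Function.comp_apply,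
      Submodule.coe_subtype, Submodule.mem_span_singleton]
    constructor
    · intro h0
      obtain ⟨l, hl⟩ := (key x hx).2 h0
      exact ⟨l, Subtype.ext hl.symm⟩
    · rintro ⟨a, ha⟩
      have hxa : x = a • c := (congrArg Subtype.val ha).symm
      rw [hxa, map_smul, pi_c, smul_zero]
  have hkerrank : Module.finrank (ZMod 5) (LinearMap.ker (π ∘ₗ C.subtype)) = 1 := by
    rw [hker]
    exact finrank_span_singleton hc'
  rw [hrange, hkerrank, hCk] at hfin
  have hDrank : Module.finrank (ZMod 5) (C.map π) = k - 1 := by omega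
  refine ⟨C.map π, hDrank, ?_⟩
  have hDne : C.map π ≠ ⊥ := by
    intro hbot
    rw [hbot, finrank_bot] at hDrank
    omega
  obtain ⟨y, hyD, hy0⟩ := Submodule.exists_mem_ne_zero_of_ne_bot hDne
  have hWne : {w | ∃ y ∈ C.map π, y ≠ 0 ∧ hammingNorm y = w}.Nonempty :=
    ⟨hammingNorm y, y, hyD, hy0, rfl⟩
  obtain ⟨y0, hy0D, hy00, hy0w⟩ := Nat.sInf_mem hWne
  refine ⟨sInf {w | ∃ y ∈ C.map π, y ≠ 0 ∧ hammingNorm y = w},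
    ⟨⟨y0, hy0D, hy00, hy0w⟩, fun x hx hx0 => Nat.sInf_le ⟨x, hx, hx0, rfl⟩⟩, ?_⟩
  obtain ⟨x, hxC, hxy⟩ := Submodule.mem_map.mp hy0D
  have hbd := (key x hxC).1 (by rw [hxy]; exact hy00)
  rw [hxy, hy0w] at hbd
  exact hbd
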